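/- Let f : ℝ² → ℝ be bounded and continuous with ∂_x f continuous and bounded, and define A = f ∂_x on L²(ℝ²). Then for all u ∈ D(A), ⟨Au, u⟩_{L²} ≥ −(1/2)‖∂_x f‖_{L^∞} ‖u‖_{L²}². -/

import Mathlib

open MeasureTheory Filter
open scoped ENNReal

noncomputable section

/-- Fourier transform on ℝ². -/
def FT2 (f : ℝ × ℝ → ℂ) : ℝ × ℝ → ℂ := fun p =>
  ∫ q : ℝ × ℝ, Complex.exp (-((2 * Real.pi * (p.1 * q.1 + p.2 * q.2) : ℝ) : ℂ) * Complex.I) * f q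

/-- Inverse Fourier transform on ℝ². -/
def IFT2 (f : ℝ × ℝ → ℂ) : ℝ × ℝ → ℂ := fun x =>
  ∫ p : ℝ × ℝ, Complex.exp (((2 * Real.pi * (x.1 * p.1 + x.2 * p.2) : ℝ) : ℂ) * Complex.I) * f p

/-- Homogeneous fractional derivative in `x`, symbol `|ξ|^s`. -/
def Dx (s : ℝ) (f : ℝ × ℝ → ℂ) : ℝ × ℝ → ℂ :=
  IFT2 fun p => ((|p.1| ^ s : ℝ) : ℂ) * FT2 f p

/-- Fractional derivative in `x` with complex order `β`. -/
def DxC (β : ℂ) (f : ℝ × ℝ → ℂ) : ℝ × ℝ → ℂ :=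
  IFT2 fun p => (((|p.1| : ℝ) : ℂ) ^ β) * FT2 f p

/-- Inhomogeneous derivative `J_x^s = (1+|D_x|²)^{s/2}`. -/
def Jx (s : ℝ) (f : ℝ × ℝ → ℂ) : ℝ × ℝ → ℂ :=
  IFT2 fun p => (((1 + p.1 ^ 2) ^ (s / 2) : ℝ) : ℂ) * FT2 f p

/-- Real-valued version of `J_x^s`. -/
def JxR (s : ℝ) (f : ℝ × ℝ → ℝ) : ℝ × ℝ → ℝ := fun z =>
  (Jx s (fun w => ((f w : ℝ) : ℂ)) z).re

/-- The unitary group `W_α(t)` with symbol `e^{-it(ξ³+sgn(ξ)|ξ|^α η²)}`. -/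
def Wgrp (α t : ℝ) (f : ℝ × ℝ → ℂ) : ℝ × ℝ → ℂ :=
  IFT2 fun p =>
    Complex.exp (-Complex.I * (t : ℂ) *
      ((p.1 ^ 3 + Real.sign p.1 * |p.1| ^ α * p.2 ^ 2 : ℝ) : ℂ)) * FT2 f p

/-- The operator `ℋ D_x^α` (Hilbert transform composed with fractional derivative in `x`). -/
def HDa (α : ℝ) (f : ℝ × ℝ → ℂ) : ℝ × ℝ → ℂ :=
  IFT2 fun p => (-Complex.I) * ((Real.sign p.1 * |p.1| ^ α : ℝ) : ℂ) * FT2 f p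

/-- Anisotropic Sobolev norm of `H^{s₁,s₂}(ℝ²)`. -/
def HNorm2 (s₁ s₂ : ℝ) (f : ℝ × ℝ → ℂ) : ℝ :=
  Real.sqrt (∫ p : ℝ × ℝ, ((1 + p.1 ^ 2) ^ s₁ + (1 + p.2 ^ 2) ^ s₂) * ‖FT2 f p‖ ^ 2)

/-- Membership in the anisotropic Sobolev space `H^{s₁,s₂}(ℝ²)`. -/
def MemH (s₁ s₂ : ℝ) (f : ℝ × ℝ → ℂ) : Prop :=
  Integrable (fun p : ℝ × ℝ => ((1 + p.1 ^ 2) ^ s₁ + (1 + p.2 ^ 2) ^ s₂) * ‖FT2 f p‖ ^ 2) volume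

/-- Homogeneous anisotropic Sobolev norm. -/
def HdotNorm (s₁ s₂ : ℝ) (f : ℝ × ℝ → ℂ) : ℝ :=
  Real.sqrt (∫ p : ℝ × ℝ, (|p.1| ^ (2 * s₁) + |p.2| ^ (2 * s₂)) * ‖FT2 f p‖ ^ 2)

/-- `u` solves `u_t = u_{xxx} - ℋ D_x^α u_{yy} + u u_x` (complex-valued version). -/
def IsSol (α : ℝ) (u : ℝ → ℝ × ℝ → ℂ) : Prop :=
  ∀ t : ℝ, ∀ z : ℝ × ℝ,
    HasDerivAt (fun s => u s z)
      (iteratedDeriv 3 (fun a => u t (a, z.2)) z.1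
        - HDa α (fun w => iteratedDeriv 2 (fun b => u t (w.1, b)) w.2) z
        + u t z * deriv (fun a => u t (a, z.2)) z.1) t

/-- `u` solves `u_t = u_{xxx} - ℋ D_x^α u_{yy} + u u_x` (real-valued version). -/
def IsSolR (α : ℝ) (u : ℝ → ℝ × ℝ → ℝ) : Prop :=
  ∀ t : ℝ, ∀ z : ℝ × ℝ,
    HasDerivAt (fun s => u s z)
      (iteratedDeriv 3 (fun a => u t (a, z.2)) z.1
        - (HDa α (fun w => ((iteratedDeriv 2 (fun b => u t (w.1, b)) w.2 : ℝ) : ℂ)) z).re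
        + u t z * deriv (fun a => u t (a, z.2)) z.1) t

/-- `u` solves the equation on the time interval `[0,T]` (real-valued version). -/
def IsSolROn (α T : ℝ) (u : ℝ → ℝ × ℝ → ℝ) : Prop :=
  ∀ t ∈ Set.Icc (0 : ℝ) T, ∀ z : ℝ × ℝ,
    HasDerivAt (fun s => u s z)
      (iteratedDeriv 3 (fun a => u t (a, z.2)) z.1
        - (HDa α (fun w => ((iteratedDeriv 2 (fun b => u t (w.1, b)) w.2 : ℝ) : ℂ)) z).re
        + u t z * deriv (fun a => u t (a, z.2)) z.1) t

/-- `w` solves the inhomogeneous linear equation `∂_t w = w_{xxx} - ℋ D_x^α w_{yy} + F` on `[0,T]`. -/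
def IsSolLin (α T : ℝ) (w F : ℝ → ℝ × ℝ → ℂ) : Prop :=
  ∀ t ∈ Set.Icc (0 : ℝ) T, ∀ z : ℝ × ℝ,
    HasDerivAt (fun s => w s z)
      (iteratedDeriv 3 (fun a => w t (a, z.2)) z.1
        - HDa α (fun q => iteratedDeriv 2 (fun b => w t (q.1, b)) q.2) z
        + F t z) t

open Topology

/-- If `g` is dominated by an integrable function and tends to `L` at `atTop`, then `L = 0`. -/
lemma limit_zero_atTop_of_dominated {g h : ℝ → ℝ} (hh : Integrable h volume)
    (hb : ∀ x, |g x| ≤ h x) {L : ℝ} (hg : Tendsto g atTop (𝓝 L)) : L = 0 := by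
  by_contra hL
  have habs : Tendsto (fun x => |g x|) atTop (𝓝 |L|) := hg.abs
  have hhalf : (0:ℝ) < |L| / 2 := by positivity
  have hev : ∀ᶠ x in atTop, |L| / 2 ≤ |g x| :=
    habs.eventually (eventually_ge_nhds (by linarith [abs_pos.mpr hL]))
  obtain ⟨a, ha⟩ := hev.exists_forall_of_atTop
  have hconst : Integrable (fun _ : ℝ => |L| / 2) (volume.restrict (Set.Ioi a)) := by
    refine (hh.restrict (s := Set.Ioi a)).mono' aestronglyMeasurable_const ?_
    refine (ae_restrict_iff' measurableSet_Ioi).2 (Filter.Eventually.of_forall fun x hx => ?_)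
    have h1 : |L| / 2 ≤ |g x| := ha x hx.le
    have h2 : |g x| ≤ h x := hb x
    simp only [Real.norm_eq_abs, abs_of_nonneg hhalf.le]
    linarith
  rcases (integrable_const_iff).1 hconst with h0 | hfin
  · exact absurd h0 (ne_of_gt hhalf)
  · rw [isFiniteMeasure_restrict, Real.volume_Ioi] at hfin
    exact absurd hfin (by simp)

/-- `atBot` version of `limit_zero_atTop_of_dominated`. -/
lemma limit_zero_atBot_of_dominated {g h : ℝ → ℝ} (hh : Integrable h volume)
    (hb : ∀ x, |g x| ≤ h x) {L : ℝ} (hg : Tendsto g atBot (𝓝 L)) : L = 0 := by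
  have hh' : Integrable (fun x => h (-x)) volume := hh.comp_neg
  have hg' : Tendsto (fun x => g (-x)) atTop (𝓝 L) := hg.comp tendsto_neg_atTop_atBot
  exact limit_zero_atTop_of_dominated hh' (fun x => hb (-x)) hg'


theorem stmt5 (f f' u u' : ℝ × ℝ → ℝ)
    (hfc : Continuous f) (hfb : ∃ M, ∀ z, |f z| ≤ M)
    (hfd : ∀ z : ℝ × ℝ, HasDerivAt (fun x => f (x, z.2)) (f' z) z.1)
    (hf'c : Continuous f') (hf'b : ∃ M, ∀ z, |f' z| ≤ M)
    (hu : MemLp u 2 volume)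
    (hud : ∀ z : ℝ × ℝ, HasDerivAt (fun x => u (x, z.2)) (u' z) z.1)
    (hAu : MemLp (fun z => f z * u' z) 2 volume) :
    -(1 / 2) * sSup (Set.range fun z => |f' z|) * (eLpNorm u 2 volume).toReal ^ 2 ≤
      ∫ z : ℝ × ℝ, f z * u' z * u z := by
  obtain ⟨M, hM⟩ := hfb
  set M' : ℝ := max M 0 with hM'def
  have hM' : ∀ z, |f z| ≤ M' := fun z => (hM z).trans (le_max_left _ _)
  have hM'0 : (0:ℝ) ≤ M' := le_max_right _ _
  set C : ℝ := sSup (Set.range fun z => |f' z|) with hCdef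
  have hbdd : BddAbove (Set.range fun z => |f' z|) := by
    obtain ⟨K, hK⟩ := hf'b
    exact ⟨K, fun y ⟨z, hz⟩ => hz ▸ hK z⟩
  have hC : ∀ z, |f' z| ≤ C := fun z => le_csSup hbdd ⟨z, rfl⟩
  have hC0 : (0:ℝ) ≤ C := le_trans (abs_nonneg _) (hC (0,0))
  -- basic integrability
  have hu2 : Integrable (fun z => u z ^ 2) volume := hu.integrable_sq
  have hAuu : Integrable (fun z => f z * u' z * u z) volume := by
    have h1 : MemLp ((fun z => f z * u' z) • u) 1 volume := by
      refine hu.smul hAu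
    have := memLp_one_iff_integrable.mp h1
    exact (by simpa [Pi.smul_apply, smul_eq_mul] using this : Integrable ((fun z => f z * u' z) * u) volume)
  have hf'u2 : Integrable (fun z => f' z * u z ^ 2) volume :=
    hu2.bdd_mul hf'c.aestronglyMeasurable (c := C) (Filter.Eventually.of_forall fun z => by simpa using hC z)
  set G : ℝ × ℝ → ℝ := fun z => f' z * u z ^ 2 + 2 * (f z * u' z * u z) with hGdef
  have hG : Integrable G volume := hf'u2.add (hAuu.const_mul 2)
  -- the integration by parts identity
  have key : ∫ z, G z = 0 := by
    have hGp : Integrable G (volume.prod volume) := by rwa [← Measure.volume_eq_prod]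
    have hu2p : Integrable (fun z : ℝ × ℝ => u z ^ 2) (volume.prod volume) := by
      rwa [← Measure.volume_eq_prod]
    have hfub : ∫ z, G z = ∫ y, ∫ x, G (x, y) := by
      rw [Measure.volume_eq_prod]
      exact integral_prod_symm G hGp
    rw [hfub]
    have hae : ∀ᵐ y : ℝ, (∫ x, G (x, y)) = 0 := by
      filter_upwards [hGp.prod_left_ae, hu2p.prod_left_ae] with y hGy hu2y
      set g : ℝ → ℝ := fun x => f (x, y) * u (x, y) ^ 2 with hgdef
      have hderiv : ∀ x : ℝ, HasDerivAt g (G (x, y)) x := by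
        intro x
        have h1 := (hfd (x, y)).mul ((hud (x, y)).pow 2)
        convert h1 using 1
        · rfl
        · rfl
        · rfl
        simp [hGdef]
        push_cast
        ring
      have hftc : ∀ a b : ℝ, (∫ t in a..b, G (t, y)) = g b - g a := fun a b =>
        intervalIntegral.integral_eq_sub_of_hasDerivAt (fun x _ => hderiv x)
          hGy.intervalIntegrable
      have hdom : ∀ x : ℝ, |g x| ≤ M' * u (x, y) ^ 2 := by
        intro x
        rw [hgdef, abs_mul, abs_of_nonneg (sq_nonneg (u (x, y)))]
        exact mul_le_mul_of_nonneg_right (hM' (x, y)) (sq_nonneg _)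
      have hhint : Integrable (fun x => M' * u (x, y) ^ 2) volume := hu2y.const_mul M'
      -- limit at +∞
      have Ttop : Tendsto g atTop (𝓝 (g 0 + ∫ t in Set.Ioi (0:ℝ), G (t, y))) := by
        have h1 := intervalIntegral_tendsto_integral_Ioi 0 hGy.integrableOn
          (tendsto_id (α := ℝ))
        have h2 : Tendsto (fun b => g b - g 0) atTop
            (𝓝 (∫ t in Set.Ioi (0:ℝ), G (t, y))) := by
          simp only [id_eq] at h1
          refine h1.congr fun b => hftc 0 b
        have := h2.add_const (g 0)
        simp only [sub_add_cancel] at this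
        convert this using 2
        ring
      have Tbot : Tendsto g atBot (𝓝 (g 0 - ∫ t in Set.Iic (0:ℝ), G (t, y))) := by
        have h1 := intervalIntegral_tendsto_integral_Iic 0 hGy.integrableOn
          (tendsto_id (α := ℝ))
        have h2 : Tendsto (fun a => g 0 - g a) atBot
            (𝓝 (∫ t in Set.Iic (0:ℝ), G (t, y))) := by
          simp only [id_eq] at h1
          refine h1.congr fun a => hftc a 0
        have h3 := (h2.const_sub (g 0))
        refine h3.congr fun a => by ring
      have Ltop := limit_zero_atTop_of_dominated hhint hdom Ttop
      have Lbot := limit_zero_atBot_of_dominated hhint hdom Tbot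
      -- total integral
      have Tall : Tendsto (fun x : ℝ => g x - g (-x)) atTop (𝓝 (∫ t, G (t, y))) := by
        have h1 := intervalIntegral_tendsto_integral hGy
          (tendsto_neg_atTop_atBot) (tendsto_id (α := ℝ))
        simp only [id_eq] at h1
        refine h1.congr fun x => hftc (-x) x
      have Tall' : Tendsto (fun x : ℝ => g x - g (-x)) atTop
          (𝓝 ((g 0 + ∫ t in Set.Ioi (0:ℝ), G (t, y)) -
            (g 0 - ∫ t in Set.Iic (0:ℝ), G (t, y)))) :=
        Ttop.sub (Tbot.comp tendsto_neg_atTop_atBot)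
      have := tendsto_nhds_unique Tall Tall'
      rw [this]
      linarith [Ltop, Lbot]
    calc (∫ y, ∫ x, G (x, y)) = ∫ y, (0:ℝ) := integral_congr_ae hae
      _ = 0 := integral_zero _ _
  -- split the identity
  have hsplit : (∫ z, f' z * u z ^ 2) + 2 * ∫ z, f z * u' z * u z = 0 := by
    rw [← integral_const_mul, ← integral_add hf'u2 (hAuu.const_mul 2)]
    exact key
  -- bound ∫ f' u²
  have hbound : ∫ z, f' z * u z ^ 2 ≤ C * ∫ z, u z ^ 2 := by
    rw [← integral_const_mul]
    refine integral_mono hf'u2 (hu2.const_mul C) fun z => ?_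
    exact mul_le_mul_of_nonneg_right ((le_abs_self _).trans (hC z)) (sq_nonneg _)
  -- norm identity
  have hT : (eLpNorm u 2 volume).toReal ^ 2 = ∫ z, u z ^ 2 := by
    rw [hu.eLpNorm_eq_integral_rpow_norm two_ne_zero ENNReal.ofNat_ne_top,
      ENNReal.toReal_ofReal (by positivity)]
    have hint : ∀ a : ℝ × ℝ, ‖u a‖ ^ (2:ℝ) = u a ^ 2 := by
      intro a
      rw [show (2:ℝ) = ((2:ℕ):ℝ) by norm_num, Real.rpow_natCast]
      simp [Real.norm_eq_abs, sq_abs]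
    simp only [ENNReal.toReal_ofNat]
    simp only [hint]
    have hnn : (0:ℝ) ≤ ∫ z, u z ^ 2 := integral_nonneg fun z => sq_nonneg _
    rw [← Real.rpow_natCast ((∫ z, u z ^ 2) ^ ((2:ℝ)⁻¹)) 2, ← Real.rpow_mul hnn]
    norm_num
  rw [hT]
  have h5 : -(1 / 2) * C * (∫ z, u z ^ 2) = -(1 / 2) * (C * ∫ z, u z ^ 2) := by ring
  rw [h5]
  linarith [hsplit, hbound]
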